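/- Let t = t_m ∈ (0, 1) satisfy m·t_m² → ∞ as m → ∞. Then ∫_{t_m}^1 (1 − x²)^{m/2} dx = (1/(m·t_m))·(1 − t_m²)^{(m+2)/2}·(1 + o(1)) as m → ∞; that is, the ratio of the integral to (1/(m·t_m))·(1 − t_m²)^{(m+2)/2} converges to 1 as m → ∞. -/

import Mathlib

open MeasureTheory Filter

noncomputable section

lemma cont_aux {p : ℝ} (hp : 0 ≤ p) : Continuous fun x : ℝ => (1 - x ^ 2) ^ p := by
  apply Continuous.rpow_const (by continuity)
  intro x; exact Or.inr hp

lemma arith_aux {Mr t B I C : ℝ} (ht0 : 0 < t) (hid : Mr * I + C = B / t)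
    (hC0 : 0 ≤ C) (hCle : C ≤ I / t ^ 2) (hM : 0 < Mr) :
    B / (t * (Mr + 1 / t ^ 2)) ≤ I ∧ I ≤ B / (Mr * t) := by
  have h4 : B = (Mr * I + C) * t := (div_eq_iff ht0.ne').mp hid.symm
  constructor
  · rw [div_le_iff₀ (by positivity)]
    have h2 : t * C ≤ t * (I / t ^ 2) := mul_le_mul_of_nonneg_left hCle ht0.le
    have h3 : t * (I / t ^ 2) = I / t := by field_simp
    have h5 : I * (t * (Mr + 1 / t ^ 2)) = Mr * I * t + I / t := by field_simp
    nlinarith [h4, h2, h3, h5]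
  · rw [le_div_iff₀ (by positivity)]
    nlinarith [h4, mul_nonneg hC0 ht0.le]

set_option maxHeartbeats 1000000 in
lemma key_bounds {m : ℕ} (hm : 1 ≤ m) {t : ℝ} (ht0 : 0 < t) (ht1 : t < 1) :
    (1 - t ^ 2) ^ (((m : ℝ) + 2) / 2) / (t * ((m : ℝ) + 2 + 1 / t ^ 2)) ≤
        (∫ x in t..1, (1 - x ^ 2) ^ ((m : ℝ) / 2)) ∧
      (∫ x in t..1, (1 - x ^ 2) ^ ((m : ℝ) / 2)) ≤
        (1 - t ^ 2) ^ (((m : ℝ) + 2) / 2) / (((m : ℝ) + 2) * t) := by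
  set p : ℝ := (m : ℝ) / 2 with hp
  set q : ℝ := ((m : ℝ) + 2) / 2 with hq
  have hm1 : (1 : ℝ) ≤ (m : ℝ) := by exact_mod_cast hm
  have hp0 : 0 < p := by positivity
  have hq1 : (1 : ℝ) ≤ q := by rw [hq]; linarith
  have hqp : q = p + 1 := by rw [hq, hp]; ring
  have ht01 : t ≤ 1 := ht1.le
  have ht2 : 0 < 1 - t ^ 2 := by nlinarith
  set B : ℝ := (1 - t ^ 2) ^ q with hB
  have hBpos : 0 < B := Real.rpow_pos_of_pos ht2 q
  set I : ℝ := ∫ x in t..1, (1 - x ^ 2) ^ p with hI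
  set C : ℝ := ∫ x in t..1, (1 - x ^ 2) ^ q / x ^ 2 with hC
  -- integration by parts identity
  have hmemx : ∀ x ∈ Set.uIcc t 1, 0 < x ∧ x ≤ 1 := by
    intro x hx
    rw [Set.uIcc_of_le ht01] at hx
    exact ⟨lt_of_lt_of_le ht0 hx.1, hx.2⟩
  have hcontq : Continuous fun x : ℝ => (1 - x ^ 2) ^ q := cont_aux (by linarith)
  have hcontp : Continuous fun x : ℝ => (1 - x ^ 2) ^ p := cont_aux hp0.le
  have hcontg : ContinuousOn
      (fun x : ℝ => (-((m : ℝ) + 2)) * (1 - x ^ 2) ^ p - (1 - x ^ 2) ^ q / x ^ 2)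
      (Set.uIcc t 1) := by
    apply ContinuousOn.sub (Continuous.continuousOn (by fun_prop))
    apply ContinuousOn.div hcontq.continuousOn (by fun_prop)
    intro x hx
    exact pow_ne_zero 2 (hmemx x hx).1.ne'
  have hderiv : ∀ x ∈ Set.uIcc t 1,
      HasDerivAt (fun y : ℝ => (1 - y ^ 2) ^ q / y)
        ((-((m : ℝ) + 2)) * (1 - x ^ 2) ^ p - (1 - x ^ 2) ^ q / x ^ 2) x := by
    intro x hx
    obtain ⟨hx0, _⟩ := hmemx x hx
    have h1 : HasDerivAt (fun y : ℝ => 1 - y ^ 2) (-(2 * x)) x := by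
      simpa using (hasDerivAt_pow 2 x).const_sub 1
    have h2 := h1.rpow_const (Or.inr hq1)
    have h3 := h2.div (hasDerivAt_id x) hx0.ne'
    refine h3.congr_deriv (Eq.symm ?_)
    have hq1' : q - 1 = p := by rw [hqp]; ring
    rw [hq1']
    have h2q : 2 * q = (m : ℝ) + 2 := by rw [hq]; ring
    simp only [id]
    field_simp
    linear_combination ((1 - x ^ 2) ^ p * x ^ 2) * h2q
  have hFTC := intervalIntegral.integral_eq_sub_of_hasDerivAt hderiv
    (hcontg.intervalIntegrable)
  have hintp : IntervalIntegrable (fun x : ℝ => (1 - x ^ 2) ^ p) volume t 1 :=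
    hcontp.intervalIntegrable t 1
  have hintD : IntervalIntegrable (fun x : ℝ => (1 - x ^ 2) ^ q / x ^ 2) volume t 1 := by
    apply ContinuousOn.intervalIntegrable
    apply ContinuousOn.div hcontq.continuousOn (by fun_prop)
    intro x hx
    exact pow_ne_zero 2 (hmemx x hx).1.ne'
  have hsplit : (∫ x in t..1,
      ((-((m : ℝ) + 2)) * (1 - x ^ 2) ^ p - (1 - x ^ 2) ^ q / x ^ 2))
      = (-((m : ℝ) + 2)) * I - C := by
    rw [intervalIntegral.integral_sub ((hintp.const_mul _)) hintD,
      intervalIntegral.integral_const_mul]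
  have hF1 : (1 - (1 : ℝ) ^ 2) ^ q / 1 = 0 := by
    norm_num
    exact Real.zero_rpow (by linarith)
  have hid : ((m : ℝ) + 2) * I + C = B / t := by
    rw [hsplit] at hFTC
    simp only [hF1] at hFTC
    linarith [hFTC]
  -- C bounds
  have hC0 : 0 ≤ C := by
    apply intervalIntegral.integral_nonneg ht01
    intro x hx
    have hxx : 0 ≤ 1 - x ^ 2 := by nlinarith [hx.1, hx.2, ht0]
    exact div_nonneg (Real.rpow_nonneg hxx q) (sq_nonneg x)
  have hI0 : 0 ≤ I := by
    apply intervalIntegral.integral_nonneg ht01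
    intro x hx
    have hxx : 0 ≤ 1 - x ^ 2 := by nlinarith [hx.1, hx.2, ht0]
    exact Real.rpow_nonneg hxx p
  have hCle : C ≤ I / t ^ 2 := by
    have hmono : C ≤ ∫ x in t..1, (1 - x ^ 2) ^ p / t ^ 2 := by
      apply intervalIntegral.integral_mono_on ht01 hintD (hintp.div_const _)
      intro x hx
      have hx0 : t ≤ x := hx.1
      have hx1 : x ≤ 1 := hx.2
      have hxx : 0 ≤ 1 - x ^ 2 := by nlinarith
      have hnum : (1 - x ^ 2) ^ q ≤ (1 - x ^ 2) ^ p := by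
        rcases eq_or_lt_of_le hxx with h | h
        · rw [← h, Real.zero_rpow (by linarith), Real.zero_rpow (by linarith)]
        · apply Real.rpow_le_rpow_of_exponent_ge h (by nlinarith) (by rw [hqp]; linarith)
      have ht2x : t ^ 2 ≤ x ^ 2 := by nlinarith
      apply div_le_div₀ (Real.rpow_nonneg hxx p) hnum (by positivity) ht2x
    rwa [intervalIntegral.integral_div, ← hI] at hmono
  clear_value B I C
  exact arith_aux ht0 hid hC0 hCle (by linarith)

/-- If `t_m ∈ (0,1)` and `m t_m² → ∞`, then
`∫_{t_m}^1 (1-x²)^{m/2} dx = (1/(m t_m)) (1-t_m²)^{(m+2)/2} (1+o(1))` as `m → ∞`,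
i.e. the ratio of the two sides tends to `1`. -/
theorem integral_one_sub_sq_rpow_asymptotic
    (t : ℕ → ℝ) (ht : ∀ m, t m ∈ Set.Ioo (0 : ℝ) 1)
    (hmt : Tendsto (fun m : ℕ => (m : ℝ) * t m ^ 2) atTop atTop) :
    Tendsto (fun m : ℕ =>
        (∫ x in (t m)..1, (1 - x ^ 2) ^ ((m : ℝ) / 2)) /
          (1 / ((m : ℝ) * t m) * (1 - t m ^ 2) ^ (((m : ℝ) + 2) / 2)))
      atTop (nhds 1) := by
  have hmtop : Tendsto (fun m : ℕ => (m : ℝ)) atTop atTop :=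
    tendsto_natCast_atTop_atTop
  -- lower and upper sequences
  set L : ℕ → ℝ := fun m => (m : ℝ) / ((m : ℝ) + 2 + 1 / (t m) ^ 2) with hLdef
  set U : ℕ → ℝ := fun m => (m : ℝ) / ((m : ℝ) + 2) with hUdef
  have hL : Tendsto L atTop (nhds 1) := by
    have h2m : Tendsto (fun m : ℕ => 2 / (m : ℝ)) atTop (nhds 0) :=
      tendsto_const_nhds.div_atTop hmtop
    have h1mt : Tendsto (fun m : ℕ => 1 / ((m : ℝ) * t m ^ 2)) atTop (nhds 0) :=
      tendsto_const_nhds.div_atTop hmt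
    have hsum : Tendsto (fun m : ℕ => 1 + 2 / (m : ℝ) + 1 / ((m : ℝ) * t m ^ 2))
        atTop (nhds 1) := by
      have := (tendsto_const_nhds (x := (1 : ℝ)) (f := atTop)).add h2m |>.add h1mt
      simpa using this
    have hinv : Tendsto (fun m : ℕ => (1 + 2 / (m : ℝ) + 1 / ((m : ℝ) * t m ^ 2))⁻¹)
        atTop (nhds 1) := by
      have := hsum.inv₀ (by norm_num)
      simpa using this
    apply hinv.congr'
    filter_upwards [eventually_ge_atTop 1] with m hm
    have hm0 : (0 : ℝ) < (m : ℝ) := by exact_mod_cast hm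
    have htm := ht m
    have ht0 : 0 < t m := htm.1
    rw [hLdef]
    field_simp
  have hU : Tendsto U atTop (nhds 1) := by
    have h2m : Tendsto (fun m : ℕ => 2 / ((m : ℝ) + 2)) atTop (nhds 0) :=
      tendsto_const_nhds.div_atTop (tendsto_atTop_add_const_right _ 2 hmtop)
    have : Tendsto (fun m : ℕ => 1 - 2 / ((m : ℝ) + 2)) atTop (nhds 1) := by
      have := (tendsto_const_nhds (x := (1 : ℝ)) (f := atTop)).sub h2m
      simpa using this
    apply this.congr'
    filter_upwards [eventually_ge_atTop 1] with m hm
    have hm2 : ((m : ℝ) + 2) ≠ 0 := by positivity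
    rw [hUdef]
    field_simp
    ring
  apply tendsto_of_tendsto_of_tendsto_of_le_of_le' hL hU
  · filter_upwards [eventually_ge_atTop 1] with m hm
    obtain ⟨ht0, ht1⟩ := ht m
    have hm0 : (0 : ℝ) < (m : ℝ) := by exact_mod_cast hm
    have hkey := (key_bounds hm ht0 ht1).1
    have ht2 : 0 < 1 - t m ^ 2 := by nlinarith
    have hB : 0 < (1 - t m ^ 2) ^ (((m : ℝ) + 2) / 2) := Real.rpow_pos_of_pos ht2 _
    have hden : 0 < 1 / ((m : ℝ) * t m) * (1 - t m ^ 2) ^ (((m : ℝ) + 2) / 2) := by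
      positivity
    have heq : L m = (1 - t m ^ 2) ^ (((m : ℝ) + 2) / 2) / (t m * ((m : ℝ) + 2 + 1 / t m ^ 2)) /
        (1 / ((m : ℝ) * t m) * (1 - t m ^ 2) ^ (((m : ℝ) + 2) / 2)) := by
      rw [hLdef]
      have hd2 : (0 : ℝ) < (m : ℝ) + 2 + 1 / t m ^ 2 := by positivity
      field_simp
    rw [heq]
    exact (div_le_div_iff_of_pos_right hden).2 hkey
  · filter_upwards [eventually_ge_atTop 1] with m hm
    obtain ⟨ht0, ht1⟩ := ht m
    have hm0 : (0 : ℝ) < (m : ℝ) := by exact_mod_cast hm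
    have hkey := (key_bounds hm ht0 ht1).2
    have ht2 : 0 < 1 - t m ^ 2 := by nlinarith
    have hB : 0 < (1 - t m ^ 2) ^ (((m : ℝ) + 2) / 2) := Real.rpow_pos_of_pos ht2 _
    have hden : 0 < 1 / ((m : ℝ) * t m) * (1 - t m ^ 2) ^ (((m : ℝ) + 2) / 2) := by
      positivity
    have heq : U m = (1 - t m ^ 2) ^ (((m : ℝ) + 2) / 2) / (((m : ℝ) + 2) * t m) /
        (1 / ((m : ℝ) * t m) * (1 - t m ^ 2) ^ (((m : ℝ) + 2) / 2)) := by
      rw [hUdef]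
      field_simp
    rw [heq]
    exact (div_le_div_iff_of_pos_right hden).2 hkey
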